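/- Let (g, δ_g) be a Lie coalgebra and E a vector space containing g as a subspace, with a Lie coalgebra structure δ_E on E such that g is a Lie sub-coalgebra (δ_E restricted to g equals δ_g, with values in g⊗g). Let V be a complement of g in E with projections π₁ : E → g and π₂ : E → V. Define Δ_E(x) = (π₁⊗π₂)δ_E(x), Δ_V(x) = (π₁⊗π₁)δ_E(x), δ_V(x) = (π₂⊗π₂)δ_E(x) for x ∈ V. Then (Δ_E, Δ_V, δ_V) is a Lie coalgebraic extending structure of (g, δ_g) by V, and the map φ : E → g ♮^c V, φ(a) = π₁(a) + π₂(a), is an isomorphism of Lie coalgebras whose restriction to g is the identity. -/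

import Mathlib

open TensorProduct LinearMap

noncomputable section

/-- The flip `A ⊗ B → B ⊗ A`. -/
def flipT (k A B : Type*) [Field k] [AddCommGroup A] [Module k A]
    [AddCommGroup B] [Module k B] : A ⊗[k] B →ₗ[k] B ⊗[k] A :=
  (TensorProduct.comm k A B).toLinearMap

/-- Swap of the first two tensor factors `A ⊗ (B ⊗ C) → B ⊗ (A ⊗ C)`. -/
def swap12 (k A B C : Type*) [Field k] [AddCommGroup A] [Module k A]
    [AddCommGroup B] [Module k B] [AddCommGroup C] [Module k C] :
    A ⊗[k] (B ⊗[k] C) →ₗ[k] B ⊗[k] (A ⊗[k] C) :=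
  (TensorProduct.assoc k B A C).toLinearMap ∘ₗ
    rTensor C (flipT k A B) ∘ₗ (TensorProduct.assoc k A B C).symm.toLinearMap

/-- Associator as a linear map. -/
def asr (k A B C : Type*) [Field k] [AddCommGroup A] [Module k A]
    [AddCommGroup B] [Module k B] [AddCommGroup C] [Module k C] :
    (A ⊗[k] B) ⊗[k] C →ₗ[k] A ⊗[k] (B ⊗[k] C) :=
  (TensorProduct.assoc k A B C).toLinearMap

/-- `δ : M → M ⊗ M` is a Lie coalgebra structure: anti-cocommutativity and co-Jacobi. -/
def IsLieCoalgebra {k M : Type*} [Field k] [AddCommGroup M] [Module k M]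
    (δ : M →ₗ[k] M ⊗[k] M) : Prop :=
  (∀ m, flipT k M M (δ m) = - δ m) ∧
  (∀ m, lTensor M δ (δ m) - swap12 k M M M (lTensor M δ (δ m)) =
      asr k M M M (rTensor M δ (δ m)))

/-- A (bilinear) map `b` is a Lie bracket: alternating and Jacobi (in Leibniz form). -/
def IsLieBracket {k L : Type*} [Field k] [AddCommGroup L] [Module k L]
    (b : L →ₗ[k] L →ₗ[k] L) : Prop :=
  (∀ a, b a a = 0) ∧ (∀ a c d, b a (b c d) = b (b a c) d + b c (b a d))

/-- The adjoint action of `a` on `L ⊗ L`: `a.(Σ b₁⊗b₂) = Σ [a,b₁]⊗b₂ + b₁⊗[a,b₂]`. -/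
def adT {k L : Type*} [Field k] [AddCommGroup L] [Module k L]
    (b : L →ₗ[k] L →ₗ[k] L) (a : L) : L ⊗[k] L →ₗ[k] L ⊗[k] L :=
  rTensor L (b a) + lTensor L (b a)

/-- `(L, b, δ)` is a Lie bialgebra. -/
def IsLieBialgebra {k L : Type*} [Field k] [AddCommGroup L] [Module k L]
    (b : L →ₗ[k] L →ₗ[k] L) (δ : L →ₗ[k] L ⊗[k] L) : Prop :=
  IsLieBracket b ∧ IsLieCoalgebra δ ∧
    ∀ a c, δ (b a c) = adT b a (δ c) - adT b c (δ a)

variable {k g V : Type*} [Field k] [CharZero k]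
  [AddCommGroup g] [Module k g] [AddCommGroup V] [Module k V]

/-- The unified co-product map on `E = g ⊕ V`:
`δ_E(a + x) = δ_g(a) + Δ_E(x) − τΔ_E(x) + Δ_V(x) + δ_V(x)`. -/
def uniCoprod (δg : g →ₗ[k] g ⊗[k] g) (ΔE : V →ₗ[k] g ⊗[k] V)
    (ΔV : V →ₗ[k] g ⊗[k] g) (δV : V →ₗ[k] V ⊗[k] V) :
    (g × V) →ₗ[k] (g × V) ⊗[k] (g × V) :=
  map (inl k g V) (inl k g V) ∘ₗ δg ∘ₗ fst k g V +
    (map (inl k g V) (inr k g V) ∘ₗ ΔE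
      - map (inr k g V) (inl k g V) ∘ₗ flipT k g V ∘ₗ ΔE
      + map (inl k g V) (inl k g V) ∘ₗ ΔV
      + map (inr k g V) (inr k g V) ∘ₗ δV) ∘ₗ snd k g V

/-- Conditions (CLE1)–(CLE5): `(Δ_E, Δ_V, δ_V)` is a Lie coalgebraic extending
structure of `(g, δ_g)` by `V`. -/
def IsCoalgExtStructure (δg : g →ₗ[k] g ⊗[k] g) (ΔE : V →ₗ[k] g ⊗[k] V)
    (ΔV : V →ₗ[k] g ⊗[k] g) (δV : V →ₗ[k] V ⊗[k] V) : Prop :=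
  -- (CLE1)
  (∀ x, flipT k g g (ΔV x) = - ΔV x) ∧ (∀ x, flipT k V V (δV x) = - δV x) ∧
  -- (CLE2)
  (∀ x, lTensor g ΔV (ΔE x) + lTensor g δg (ΔV x)
      - swap12 k g g g (lTensor g ΔV (ΔE x)) - swap12 k g g g (lTensor g δg (ΔV x)) =
      - asr k g g g (rTensor g ΔV (flipT k g V (ΔE x)))
      + asr k g g g (rTensor g δg (ΔV x))) ∧
  -- (CLE3)
  (∀ x, lTensor g ΔE (ΔE x) - swap12 k g g V (lTensor g ΔE (ΔE x)) =
      asr k g g V (rTensor V δg (ΔE x)) + asr k g g V (rTensor V ΔV (δV x))) ∧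
  -- (CLE4)
  (∀ x, lTensor g δV (ΔE x) - swap12 k V g V (lTensor V ΔE (δV x)) =
      asr k g V V (rTensor V ΔE (δV x))) ∧
  -- (CLE5)
  (∀ x, lTensor V δV (δV x) - swap12 k V V V (lTensor V δV (δV x)) =
      asr k V V V (rTensor V δV (δV x)))

end

noncomputable section AuxLemmas
section Generic
variable {k A B C A' B' C' D : Type*} [Field k]
  [AddCommGroup A] [Module k A] [AddCommGroup B] [Module k B]
  [AddCommGroup C] [Module k C] [AddCommGroup A'] [Module k A']
  [AddCommGroup B'] [Module k B'] [AddCommGroup C'] [Module k C']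
  [AddCommGroup D] [Module k D]

lemma aux_flipT_tmul (a : A) (b : B) : flipT k A B (a ⊗ₜ[k] b) = b ⊗ₜ[k] a := rfl

lemma aux_swap12_tmul (a : A) (b : B) (c : C) :
    swap12 k A B C (a ⊗ₜ[k] (b ⊗ₜ[k] c)) = b ⊗ₜ[k] (a ⊗ₜ[k] c) := by
  simp [swap12, flipT]

lemma aux_asr_tmul (a : A) (b : B) (c : C) :
    asr k A B C ((a ⊗ₜ[k] b) ⊗ₜ[k] c) = a ⊗ₜ[k] (b ⊗ₜ[k] c) := rfl

lemma aux_ext3 {f h : A ⊗[k] (B ⊗[k] C) →ₗ[k] D}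
    (H : ∀ a b c, f (a ⊗ₜ[k] (b ⊗ₜ[k] c)) = h (a ⊗ₜ[k] (b ⊗ₜ[k] c))) : f = h := by
  apply TensorProduct.ext'
  intro a y
  induction y using TensorProduct.induction_on with
  | zero => simp [tmul_zero]
  | tmul b c => exact H a b c
  | add y z hy hz => rw [tmul_add, map_add, map_add, hy, hz]

lemma aux_flip_natural (f : A →ₗ[k] A') (h : B →ₗ[k] B') :
    flipT k A' B' ∘ₗ map f h = map h f ∘ₗ flipT k A B := by
  apply TensorProduct.ext'; intro a b
  simp [aux_flipT_tmul]

lemma aux_swap12_natural (f : A →ₗ[k] A') (h : B →ₗ[k] B') (l : C →ₗ[k] C') :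
    map h (map f l) ∘ₗ swap12 k A B C = swap12 k A' B' C' ∘ₗ map f (map h l) := by
  apply aux_ext3; intro a b c
  simp [aux_swap12_tmul]

lemma aux_asr_natural (f : A →ₗ[k] A') (h : B →ₗ[k] B') (l : C →ₗ[k] C') :
    map f (map h l) ∘ₗ asr k A B C = asr k A' B' C' ∘ₗ map (map f h) l := by
  apply TensorProduct.ext_threefold; intro a b c
  simp [aux_asr_tmul]
end Generic

variable {k g V : Type*} [Field k]
  [AddCommGroup g] [Module k g] [AddCommGroup V] [Module k V]

lemma aux_mm1 : map (fst k g V) (fst k g V) ∘ₗ map (inl k g V) (inl k g V) = LinearMap.id := by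
  rw [← TensorProduct.map_comp]; simp [TensorProduct.map_id]
lemma aux_mm2 : map (fst k g V) (snd k g V) ∘ₗ map (inl k g V) (inl k g V) = 0 := by
  rw [← TensorProduct.map_comp]; simp
lemma aux_mm3 : map (snd k g V) (fst k g V) ∘ₗ map (inl k g V) (inl k g V) = 0 := by
  rw [← TensorProduct.map_comp]; simp
lemma aux_mm4 : map (snd k g V) (snd k g V) ∘ₗ map (inl k g V) (inl k g V) = 0 := by
  rw [← TensorProduct.map_comp]; simp

lemma aux_idT : map (inl k g V) (inl k g V) ∘ₗ map (fst k g V) (fst k g V)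
    + map (inl k g V) (inr k g V) ∘ₗ map (fst k g V) (snd k g V)
    + map (inr k g V) (inl k g V) ∘ₗ map (snd k g V) (fst k g V)
    + map (inr k g V) (inr k g V) ∘ₗ map (snd k g V) (snd k g V)
    = LinearMap.id := by
  apply TensorProduct.ext'
  intro a b
  simp only [LinearMap.add_apply, comp_apply, map_tmul, id_apply, inl_apply, inr_apply, fst_apply, snd_apply]
  conv_rhs => rw [show a = ((a.1, 0) : g × V) + (0, a.2) by ext <;> simp,
    show b = ((b.1, 0) : g × V) + (0, b.2) by ext <;> simp]
  simp only [tmul_add, add_tmul]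
  abel

section P
variable (δg : g →ₗ[k] g ⊗[k] g) (δE : (g × V) →ₗ[k] (g × V) ⊗[k] (g × V))
  (hsub : ∀ a : g, δE (inl k g V a) = map (inl k g V) (inl k g V) (δg a))

include hsub

lemma aux_decomp (e : g × V) :
    δE e = map (inl k g V) (inl k g V) (δg e.1) + δE (inr k g V e.2) := by
  have h : e = inl k g V e.1 + inr k g V e.2 := by ext <;> simp
  conv_lhs => rw [h]
  rw [map_add, hsub]

lemma aux_P1 : map (fst k g V) (fst k g V) ∘ₗ δE
    = δg ∘ₗ fst k g V + (map (fst k g V) (fst k g V) ∘ₗ δE ∘ₗ inr k g V) ∘ₗ snd k g V := by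
  apply LinearMap.ext; intro e
  simp only [comp_apply, LinearMap.add_apply]
  rw [aux_decomp δg δE hsub e, map_add, ← comp_apply (map _ _) (map _ _), aux_mm1]
  simp

lemma aux_P2 : map (fst k g V) (snd k g V) ∘ₗ δE
    = (map (fst k g V) (snd k g V) ∘ₗ δE ∘ₗ inr k g V) ∘ₗ snd k g V := by
  apply LinearMap.ext; intro e
  simp only [comp_apply]
  rw [aux_decomp δg δE hsub e, map_add, ← comp_apply (map _ _) (map _ _), aux_mm2]
  simp

lemma aux_P3 : map (snd k g V) (fst k g V) ∘ₗ δE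
    = (map (snd k g V) (fst k g V) ∘ₗ δE ∘ₗ inr k g V) ∘ₗ snd k g V := by
  apply LinearMap.ext; intro e
  simp only [comp_apply]
  rw [aux_decomp δg δE hsub e, map_add, ← comp_apply (map _ _) (map _ _), aux_mm3]
  simp

lemma aux_P4 : map (snd k g V) (snd k g V) ∘ₗ δE
    = (map (snd k g V) (snd k g V) ∘ₗ δE ∘ₗ inr k g V) ∘ₗ snd k g V := by
  apply LinearMap.ext; intro e
  simp only [comp_apply]
  rw [aux_decomp δg δE hsub e, map_add, ← comp_apply (map _ _) (map _ _), aux_mm4]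
  simp
end P
end AuxLemmas


noncomputable section
variable {k g V : Type*} [Field k] [CharZero k]
  [AddCommGroup g] [Module k g] [AddCommGroup V] [Module k V]

set_option maxHeartbeats 2000000 in
/-- **Theorem.** Let `(g, δ_g)` be a Lie coalgebra and `E = g ⊕ V` carry a Lie
coalgebra structure `δ_E` making `g` a Lie sub-coalgebra (via the canonical
inclusion).  Defining `Δ_E(x) = (π₁⊗π₂)δ_E(x)`, `Δ_V(x) = (π₁⊗π₁)δ_E(x)`,
`δ_V(x) = (π₂⊗π₂)δ_E(x)`, the triple `(Δ_E, Δ_V, δ_V)` is a Lie coalgebraic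
extending structure of `(g, δ_g)` by `V`, and `φ = π₁ + π₂` (here the identity of
`g ⊕ V`) is an isomorphism of Lie coalgebras from `(E, δ_E)` onto the unified
co-product `g ♮ᶜ V`, restricting to the identity on `g`. -/
theorem extStructure_of_subcoalgebra (δg : g →ₗ[k] g ⊗[k] g)
    (hδg : IsLieCoalgebra δg) (δE : (g × V) →ₗ[k] (g × V) ⊗[k] (g × V))
    (hδE : IsLieCoalgebra δE)
    (hsub : ∀ a : g, δE (inl k g V a) = map (inl k g V) (inl k g V) (δg a)) :
    IsCoalgExtStructure δg
      (map (fst k g V) (snd k g V) ∘ₗ δE ∘ₗ inr k g V)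
      (map (fst k g V) (fst k g V) ∘ₗ δE ∘ₗ inr k g V)
      (map (snd k g V) (snd k g V) ∘ₗ δE ∘ₗ inr k g V) ∧
    uniCoprod δg
      (map (fst k g V) (snd k g V) ∘ₗ δE ∘ₗ inr k g V)
      (map (fst k g V) (fst k g V) ∘ₗ δE ∘ₗ inr k g V)
      (map (snd k g V) (snd k g V) ∘ₗ δE ∘ₗ inr k g V) = δE := by
  obtain ⟨hanti, hcoj⟩ := hδE
  have hflip : ∀ x : V,
      flipT k g V (map (fst k g V) (snd k g V) (δE (inr k g V x)))
        = - map (snd k g V) (fst k g V) (δE (inr k g V x)) := by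
    intro x
    have h1 := LinearMap.congr_fun (aux_flip_natural (fst k g V) (snd k g V)) (δE (inr k g V x))
    simp only [comp_apply] at h1
    rw [h1, hanti, map_neg]
  constructor
  · refine ⟨?_, ?_, ?_, ?_, ?_, ?_⟩
    · -- CLE1a
      intro x
      simp only [comp_apply]
      have h1 := LinearMap.congr_fun (aux_flip_natural (fst k g V) (fst k g V)) (δE (inr k g V x))
      simp only [comp_apply] at h1
      rw [h1, hanti, map_neg]
    · -- CLE1b
      intro x
      simp only [comp_apply]
      have h1 := LinearMap.congr_fun (aux_flip_natural (snd k g V) (snd k g V)) (δE (inr k g V x))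
      simp only [comp_apply] at h1
      rw [h1, hanti, map_neg]
    · -- CLE2
      intro x
      have H := congrArg (map (fst k g V) (map (fst k g V) (fst k g V))) (hcoj (inr k g V x))
      rw [map_sub] at H
      have e1 : map (fst k g V) (map (fst k g V) (fst k g V)) ∘ₗ lTensor (g × V) δE
          = lTensor g δg ∘ₗ map (fst k g V) (fst k g V)
            + lTensor g (map (fst k g V) (fst k g V) ∘ₗ δE ∘ₗ inr k g V)
              ∘ₗ map (fst k g V) (snd k g V) := by
        rw [map_comp_lTensor, aux_P1 δg δE hsub, TensorProduct.map_add_right,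
          lTensor_comp_map, lTensor_comp_map]
      have e4 : map (map (fst k g V) (fst k g V)) (fst k g V) ∘ₗ rTensor (g × V) δE
          = rTensor g δg ∘ₗ map (fst k g V) (fst k g V)
            + rTensor g (map (fst k g V) (fst k g V) ∘ₗ δE ∘ₗ inr k g V)
              ∘ₗ map (snd k g V) (fst k g V) := by
        rw [map_comp_rTensor, aux_P1 δg δE hsub, TensorProduct.map_add_left,
          rTensor_comp_map, rTensor_comp_map]
      have f1 := LinearMap.congr_fun e1 (δE (inr k g V x))
      have f2 := LinearMap.congr_fun
        (aux_swap12_natural (k := k) (fst k g V) (fst k g V) (fst k g V))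
        (lTensor (g × V) δE (δE (inr k g V x)))
      have f3 := LinearMap.congr_fun
        (aux_asr_natural (k := k) (fst k g V) (fst k g V) (fst k g V))
        (rTensor (g × V) δE (δE (inr k g V x)))
      have f4 := LinearMap.congr_fun e4 (δE (inr k g V x))
      simp only [comp_apply, LinearMap.add_apply] at f1 f2 f3 f4
      rw [f1, f2, f1, f3, f4] at H
      have h5 : map (snd k g V) (fst k g V) (δE (inr k g V x))
          = - flipT k g V (map (fst k g V) (snd k g V) (δE (inr k g V x))) := by
        rw [hflip x, neg_neg]
      rw [h5] at H
      simp only [comp_apply]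
      simp only [map_add, map_neg] at H ⊢
      abel_nf at H ⊢
      exact H
    · -- CLE3
      intro x
      have H := congrArg (map (fst k g V) (map (fst k g V) (snd k g V))) (hcoj (inr k g V x))
      rw [map_sub] at H
      have e1 : map (fst k g V) (map (fst k g V) (snd k g V)) ∘ₗ lTensor (g × V) δE
          = lTensor g (map (fst k g V) (snd k g V) ∘ₗ δE ∘ₗ inr k g V)
            ∘ₗ map (fst k g V) (snd k g V) := by
        rw [map_comp_lTensor, aux_P2 δg δE hsub, lTensor_comp_map]
      have e4 : map (map (fst k g V) (fst k g V)) (snd k g V) ∘ₗ rTensor (g × V) δE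
          = rTensor V δg ∘ₗ map (fst k g V) (snd k g V)
            + rTensor V (map (fst k g V) (fst k g V) ∘ₗ δE ∘ₗ inr k g V)
              ∘ₗ map (snd k g V) (snd k g V) := by
        rw [map_comp_rTensor, aux_P1 δg δE hsub, TensorProduct.map_add_left,
          rTensor_comp_map, rTensor_comp_map]
      have f1 := LinearMap.congr_fun e1 (δE (inr k g V x))
      have f2 := LinearMap.congr_fun
        (aux_swap12_natural (k := k) (fst k g V) (fst k g V) (snd k g V))
        (lTensor (g × V) δE (δE (inr k g V x)))
      have f3 := LinearMap.congr_fun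
        (aux_asr_natural (k := k) (fst k g V) (fst k g V) (snd k g V))
        (rTensor (g × V) δE (δE (inr k g V x)))
      have f4 := LinearMap.congr_fun e4 (δE (inr k g V x))
      simp only [comp_apply, LinearMap.add_apply] at f1 f2 f3 f4
      rw [f1, f2, f1, f3, f4, map_add] at H
      simp only [comp_apply]
      exact H
    · -- CLE4
      intro x
      have H := congrArg (map (fst k g V) (map (snd k g V) (snd k g V))) (hcoj (inr k g V x))
      rw [map_sub] at H
      have e1 : map (fst k g V) (map (snd k g V) (snd k g V)) ∘ₗ lTensor (g × V) δE
          = lTensor g (map (snd k g V) (snd k g V) ∘ₗ δE ∘ₗ inr k g V)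
            ∘ₗ map (fst k g V) (snd k g V) := by
        rw [map_comp_lTensor, aux_P4 δg δE hsub, lTensor_comp_map]
      have e2 : map (snd k g V) (map (fst k g V) (snd k g V)) ∘ₗ lTensor (g × V) δE
          = lTensor V (map (fst k g V) (snd k g V) ∘ₗ δE ∘ₗ inr k g V)
            ∘ₗ map (snd k g V) (snd k g V) := by
        rw [map_comp_lTensor, aux_P2 δg δE hsub, lTensor_comp_map]
      have e4 : map (map (fst k g V) (snd k g V)) (snd k g V) ∘ₗ rTensor (g × V) δE
          = rTensor V (map (fst k g V) (snd k g V) ∘ₗ δE ∘ₗ inr k g V)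
            ∘ₗ map (snd k g V) (snd k g V) := by
        rw [map_comp_rTensor, aux_P2 δg δE hsub, rTensor_comp_map]
      have f1 := LinearMap.congr_fun e1 (δE (inr k g V x))
      have f2 := LinearMap.congr_fun
        (aux_swap12_natural (k := k) (snd k g V) (fst k g V) (snd k g V))
        (lTensor (g × V) δE (δE (inr k g V x)))
      have f2' := LinearMap.congr_fun e2 (δE (inr k g V x))
      have f3 := LinearMap.congr_fun
        (aux_asr_natural (k := k) (fst k g V) (snd k g V) (snd k g V))
        (rTensor (g × V) δE (δE (inr k g V x)))
      have f4 := LinearMap.congr_fun e4 (δE (inr k g V x))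
      simp only [comp_apply] at f1 f2 f2' f3 f4
      rw [f1, f2, f2', f3, f4] at H
      simp only [comp_apply]
      exact H
    · -- CLE5
      intro x
      have H := congrArg (map (snd k g V) (map (snd k g V) (snd k g V))) (hcoj (inr k g V x))
      rw [map_sub] at H
      have e1 : map (snd k g V) (map (snd k g V) (snd k g V)) ∘ₗ lTensor (g × V) δE
          = lTensor V (map (snd k g V) (snd k g V) ∘ₗ δE ∘ₗ inr k g V)
            ∘ₗ map (snd k g V) (snd k g V) := by
        rw [map_comp_lTensor, aux_P4 δg δE hsub, lTensor_comp_map]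
      have e4 : map (map (snd k g V) (snd k g V)) (snd k g V) ∘ₗ rTensor (g × V) δE
          = rTensor V (map (snd k g V) (snd k g V) ∘ₗ δE ∘ₗ inr k g V)
            ∘ₗ map (snd k g V) (snd k g V) := by
        rw [map_comp_rTensor, aux_P4 δg δE hsub, rTensor_comp_map]
      have f1 := LinearMap.congr_fun e1 (δE (inr k g V x))
      have f2 := LinearMap.congr_fun
        (aux_swap12_natural (k := k) (snd k g V) (snd k g V) (snd k g V))
        (lTensor (g × V) δE (δE (inr k g V x)))
      have f3 := LinearMap.congr_fun
        (aux_asr_natural (k := k) (snd k g V) (snd k g V) (snd k g V))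
        (rTensor (g × V) δE (δE (inr k g V x)))
      have f4 := LinearMap.congr_fun e4 (δE (inr k g V x))
      simp only [comp_apply] at f1 f2 f3 f4
      rw [f1, f2, f1, f3, f4] at H
      simp only [comp_apply]
      exact H
  · -- the unified coproduct recovers δE
    apply LinearMap.ext
    intro e
    have hd := aux_decomp δg δE hsub e
    have hid := LinearMap.congr_fun aux_idT (δE (inr k g V e.2))
    simp only [LinearMap.add_apply, comp_apply, id_apply] at hid
    have h5 := hflip e.2
    rw [hd]
    simp only [uniCoprod, LinearMap.add_apply, comp_apply, LinearMap.sub_apply, fst_apply, snd_apply]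
    rw [h5, map_neg, sub_neg_eq_add]
    conv_rhs => rw [← hid]
    abel


end
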